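/- Hellinger control of differences of expectations: let (Ω, 𝓕, μ₀) be a probability space, let p, q : Ω → [0,∞) be measurable with ∫ p dμ₀ = ∫ q dμ₀ = 1, and let f : Ω → ℝ be measurable with ∫ f² p dμ₀ < ∞ and ∫ f² q dμ₀ < ∞. Then | ∫ f p dμ₀ − ∫ f q dμ₀ | ≤ √2 · ( ∫ f² p dμ₀ + ∫ f² q dμ₀ )^{1/2} · ( ∫ (√p − √q)² dμ₀ )^{1/2}. -/

import Mathlib

open MeasureTheory

/-- Hellinger control of differences of expectations: for probability densities `p, q`
with respect to a probability measure `μ₀` and a measurable `f` with finite second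
moments `∫ f² p dμ₀` and `∫ f² q dμ₀`,
`|∫ f p dμ₀ − ∫ f q dμ₀| ≤ √2 (∫ f² p dμ₀ + ∫ f² q dμ₀)^{1/2} (∫ (√p − √q)² dμ₀)^{1/2}`. -/
theorem hellinger_controls_expectation_difference {Ω : Type*} [MeasurableSpace Ω]
    (μ₀ : Measure Ω) [IsProbabilityMeasure μ₀]
    (p q : Ω → ℝ) (hpm : Measurable p) (hqm : Measurable q)
    (hp0 : ∀ x, 0 ≤ p x) (hq0 : ∀ x, 0 ≤ q x)
    (hp1 : (∫ x, p x ∂μ₀) = 1) (hq1 : (∫ x, q x ∂μ₀) = 1)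
    (f : Ω → ℝ) (hfm : Measurable f)
    (hfp : Integrable (fun x => f x ^ 2 * p x) μ₀)
    (hfq : Integrable (fun x => f x ^ 2 * q x) μ₀) :
    |(∫ x, f x * p x ∂μ₀) - ∫ x, f x * q x ∂μ₀| ≤
      Real.sqrt 2 *
        Real.sqrt ((∫ x, f x ^ 2 * p x ∂μ₀) + ∫ x, f x ^ 2 * q x ∂μ₀) *
        Real.sqrt (∫ x, (Real.sqrt (p x) - Real.sqrt (q x)) ^ 2 ∂μ₀) := by
  set g : Ω → ℝ := fun x => f x * (Real.sqrt (p x) + Real.sqrt (q x)) with hg_def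
  set h : Ω → ℝ := fun x => Real.sqrt (p x) - Real.sqrt (q x) with hh_def
  have hpint : Integrable p μ₀ := by
    by_contra hc
    rw [integral_undef hc] at hp1; norm_num at hp1
  have hqint : Integrable q μ₀ := by
    by_contra hc
    rw [integral_undef hc] at hq1; norm_num at hq1
  have hgm : Measurable g := hfm.mul ((hpm.sqrt).add (hqm.sqrt))
  have hhm : Measurable h := (hpm.sqrt).sub (hqm.sqrt)
  have hsp : ∀ x, Real.sqrt (p x) ^ 2 = p x := fun x => Real.sq_sqrt (hp0 x)
  have hsq : ∀ x, Real.sqrt (q x) ^ 2 = q x := fun x => Real.sq_sqrt (hq0 x)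
  -- g² ≤ 2 (f² p + f² q)
  have hg2le : ∀ x, g x ^ 2 ≤ 2 * (f x ^ 2 * p x + f x ^ 2 * q x) := by
    intro x
    have h1 := hsp x
    have h2 := hsq x
    have h3 : (Real.sqrt (p x) - Real.sqrt (q x)) ^ 2 ≥ 0 := sq_nonneg _
    simp only [hg_def, mul_pow]
    nlinarith [sq_nonneg (f x), sq_nonneg (f x * (Real.sqrt (p x) - Real.sqrt (q x)))]
  have hh2le : ∀ x, h x ^ 2 ≤ 2 * (p x + q x) := by
    intro x
    have h1 := hsp x
    have h2 := hsq x
    simp only [hh_def]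
    nlinarith [sq_nonneg (Real.sqrt (p x) + Real.sqrt (q x))]
  have hg2int : Integrable (fun x => g x ^ 2) μ₀ := by
    refine Integrable.mono' ((hfp.add hfq).const_mul 2) (hgm.pow_const 2).aestronglyMeasurable ?_
    filter_upwards with x
    rw [Real.norm_of_nonneg (sq_nonneg _)]
    exact hg2le x
  have hh2int : Integrable (fun x => h x ^ 2) μ₀ := by
    refine Integrable.mono' ((hpint.add hqint).const_mul 2) (hhm.pow_const 2).aestronglyMeasurable ?_
    filter_upwards with x
    rw [Real.norm_of_nonneg (sq_nonneg _)]
    exact hh2le x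
  -- integrability of f p and f q
  have hfpint : Integrable (fun x => f x * p x) μ₀ := by
    refine Integrable.mono' ((hfp.add hpint).const_mul (1/2)) (hfm.mul hpm).aestronglyMeasurable ?_
    filter_upwards with x
    rw [Real.norm_eq_abs, abs_mul, abs_of_nonneg (hp0 x)]
    simp only [Pi.add_apply]
    nlinarith [mul_le_mul_of_nonneg_right
        (by nlinarith [sq_nonneg (|f x| - 1), sq_abs (f x)] : |f x| ≤ (f x ^ 2 + 1) / 2) (hp0 x)]
  have hfqint : Integrable (fun x => f x * q x) μ₀ := by
    refine Integrable.mono' ((hfq.add hqint).const_mul (1/2)) (hfm.mul hqm).aestronglyMeasurable ?_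
    filter_upwards with x
    rw [Real.norm_eq_abs, abs_mul, abs_of_nonneg (hq0 x)]
    simp only [Pi.add_apply]
    nlinarith [mul_le_mul_of_nonneg_right
        (by nlinarith [sq_nonneg (|f x| - 1), sq_abs (f x)] : |f x| ≤ (f x ^ 2 + 1) / 2) (hq0 x)]
  -- pointwise identity : g * h = f p - f q
  have hgh : ∀ x, g x * h x = f x * p x - f x * q x := by
    intro x
    have h1 := hsp x
    have h2 := hsq x
    simp only [hg_def, hh_def]
    linear_combination (f x) * hsp x - (f x) * hsq x
  have hdiff : (∫ x, f x * p x ∂μ₀) - ∫ x, f x * q x ∂μ₀ = ∫ x, g x * h x ∂μ₀ := by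
    rw [← integral_sub hfpint hfqint]
    exact integral_congr_ae (Filter.Eventually.of_forall fun x => (hgh x).symm)
  -- Cauchy-Schwarz
  have hpq2 : (2:ℝ).HolderConjugate 2 := Real.HolderConjugate.two_two
  have hgmem : MemLp g (ENNReal.ofReal 2) μ₀ := by
    rw [show ENNReal.ofReal 2 = 2 by norm_num]
    exact (memLp_two_iff_integrable_sq hgm.aestronglyMeasurable).2 hg2int
  have hhmem : MemLp h (ENNReal.ofReal 2) μ₀ := by
    rw [show ENNReal.ofReal 2 = 2 by norm_num]
    exact (memLp_two_iff_integrable_sq hhm.aestronglyMeasurable).2 hh2int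
  have hCS := integral_mul_norm_le_Lp_mul_Lq hpq2 hgmem hhmem
  have hnorm2 : ∀ (u : ℝ), ‖u‖ ^ (2:ℝ) = u ^ 2 := by
    intro u
    rw [show ((2:ℝ)) = ((2:ℕ):ℝ) by norm_num, Real.rpow_natCast, Real.norm_eq_abs, sq_abs]
  have hCS' : |∫ x, g x * h x ∂μ₀| ≤
      Real.sqrt (∫ x, g x ^ 2 ∂μ₀) * Real.sqrt (∫ x, h x ^ 2 ∂μ₀) := by
    have h1 : |∫ x, g x * h x ∂μ₀| ≤ ∫ x, ‖g x‖ * ‖h x‖ ∂μ₀ := by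
      calc |∫ x, g x * h x ∂μ₀| ≤ ∫ x, ‖g x * h x‖ ∂μ₀ := by
            rw [← Real.norm_eq_abs]
            exact norm_integral_le_integral_norm _
        _ = ∫ x, ‖g x‖ * ‖h x‖ ∂μ₀ := by simp [norm_mul]
    refine h1.trans (hCS.trans_eq ?_)
    have e1 : (∫ x, ‖g x‖ ^ (2:ℝ) ∂μ₀) = ∫ x, g x ^ 2 ∂μ₀ :=
      integral_congr_ae (Filter.Eventually.of_forall fun x => hnorm2 (g x))
    have e2 : (∫ x, ‖h x‖ ^ (2:ℝ) ∂μ₀) = ∫ x, h x ^ 2 ∂μ₀ :=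
      integral_congr_ae (Filter.Eventually.of_forall fun x => hnorm2 (h x))
    rw [e1, e2, Real.sqrt_eq_rpow, Real.sqrt_eq_rpow]
  -- bound ∫ g²
  have hg2bound : (∫ x, g x ^ 2 ∂μ₀) ≤
      2 * ((∫ x, f x ^ 2 * p x ∂μ₀) + ∫ x, f x ^ 2 * q x ∂μ₀) := by
    calc (∫ x, g x ^ 2 ∂μ₀) ≤ ∫ x, 2 * (f x ^ 2 * p x + f x ^ 2 * q x) ∂μ₀ :=
          integral_mono hg2int ((hfp.add hfq).const_mul 2) hg2le
      _ = 2 * ((∫ x, f x ^ 2 * p x ∂μ₀) + ∫ x, f x ^ 2 * q x ∂μ₀) := by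
          rw [integral_const_mul, integral_add hfp hfq]
  have sqrt_g2 : Real.sqrt (∫ x, g x ^ 2 ∂μ₀) ≤
      Real.sqrt 2 * Real.sqrt ((∫ x, f x ^ 2 * p x ∂μ₀) + ∫ x, f x ^ 2 * q x ∂μ₀) := by
    rw [← Real.sqrt_mul (by norm_num : (0:ℝ) ≤ 2)]
    exact Real.sqrt_le_sqrt hg2bound
  calc |(∫ x, f x * p x ∂μ₀) - ∫ x, f x * q x ∂μ₀|
      = |∫ x, g x * h x ∂μ₀| := by rw [hdiff]
    _ ≤ Real.sqrt (∫ x, g x ^ 2 ∂μ₀) * Real.sqrt (∫ x, h x ^ 2 ∂μ₀) := hCS'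
    _ ≤ Real.sqrt 2 * Real.sqrt ((∫ x, f x ^ 2 * p x ∂μ₀) + ∫ x, f x ^ 2 * q x ∂μ₀) *
        Real.sqrt (∫ x, h x ^ 2 ∂μ₀) :=
          mul_le_mul_of_nonneg_right sqrt_g2 (Real.sqrt_nonneg _)
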